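/- Let K be a field of characteristic 0, n ≥ 2, K_n = K[x_1^{±1},...,x_n^{±1}], θ = (1,...,1), Δ(u) = Σ_{i=1}^n x_i·∂_i(u) + (n/(1−n))·u, and D_i(u) = x^{−θ+ε_i}·∂_i(u) for i = 1,...,n. If λ_0, λ_1,...,λ_n ∈ K and u_1,...,u_{n−1} ∈ K_n are such that λ_0·Δ(v) + Σ_{i=1}^n λ_i·D_i(v) = Jac_n^S(u_1,...,u_{n−1}, v) for all v ∈ K_n, then λ_0 = λ_1 = ... = λ_n = 0. In particular, no nontrivial linear combination of the derivations Δ, D_1,...,D_n of (K_n, Jac_n^S) is an interior derivation. -/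

import Mathlib

open Finset

/-- The Laurent polynomial algebra `K[x_1^{±1},…,x_n^{±1}]`, realized as the group algebra
of `ℤ^n` over `K`. -/
abbrev Laurent (K : Type*) [Field K] (n : ℕ) : Type _ := AddMonoidAlgebra K (Fin n → ℤ)

/-- The monomial `x^α`. -/
noncomputable def lmon {K : Type*} [Field K] {n : ℕ} (α : Fin n → ℤ) : Laurent K n :=
  AddMonoidAlgebra.single α 1

/-- The partial derivative `∂_i`, with `∂_i(x^α) = α_i x^{α − ε_i}`. -/
noncomputable def lpd {K : Type*} [Field K] {n : ℕ} (i : Fin n) (u : Laurent K n) :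
    Laurent K n :=
  Finsupp.sum u.coeff fun α c => AddMonoidAlgebra.single (α - Pi.single i 1) ((α i : K) * c)

/-- The Jacobian `Jac_n^S(u_1,…,u_n) = det(∂_i u_j)` on Laurent polynomials. -/
noncomputable def ljac {K : Type*} [Field K] {n : ℕ} (u : Fin n → Laurent K n) : Laurent K n :=
  Matrix.det (Matrix.of fun i j => lpd i (u j))

/-- The linear map `Δ(u) = Σ_i x_i·∂_i(u) + (n/(1−n))·u` on Laurent polynomials. -/
noncomputable def lDelta {K : Type*} [Field K] {n : ℕ} (u : Laurent K n) : Laurent K n :=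
  (∑ i : Fin n, lmon (Pi.single i 1) * lpd i u) + ((n : K) / (1 - (n : K))) • u

/-- The map `D_i(u) = x^{−θ+ε_i}·∂_i(u)` on Laurent polynomials. -/
noncomputable def lDi {K : Type*} [Field K] {n : ℕ} (i : Fin n) (u : Laurent K n) :
    Laurent K n :=
  lmon ((fun _ => (-1 : ℤ)) + Pi.single i 1) * lpd i u

section aux

variable {K : Type*} [Field K] {n : ℕ}

theorem lpd_lmon (i : Fin n) (α : Fin n → ℤ) :
    lpd i (lmon α : Laurent K n) =
      AddMonoidAlgebra.single (α - Pi.single i 1) (α i : K) := by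
  unfold lpd lmon
  rw [AddMonoidAlgebra.coeff_single, Finsupp.sum_single_index] <;> simp

noncomputable def lpdL (K : Type*) [Field K] (n : ℕ) (i : Fin n) :
    Laurent K n →ₗ[K] Laurent K n where
  toFun := lpd i
  map_add' u v := by
    unfold lpd
    rw [AddMonoidAlgebra.coeff_add, Finsupp.sum_add_index'] <;> intros <;> simp [mul_add, AddMonoidAlgebra.single_add]
  map_smul' c u := by
    unfold lpd
    rw [AddMonoidAlgebra.coeff_smul, Finsupp.sum_smul_index']
    · rw [RingHom.id_apply, Finsupp.smul_sum]
      refine Finsupp.sum_congr fun a _ => ?_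
      rw [AddMonoidAlgebra.smul_single', smul_eq_mul]
      ring_nf
    · intro a; simp

theorem amsingle_finset_sum {ι : Type*} (s : Finset ι) (f : ι → K) (a : Fin n → ℤ) :
    (AddMonoidAlgebra.single a (∑ b ∈ s, f b) : Laurent K n) = ∑ b ∈ s, AddMonoidAlgebra.single a (f b) :=
  map_sum (AddMonoidAlgebra.singleAddHom a) f s

noncomputable def ljacF (K : Type*) [Field K] (n : ℕ) :
    MultilinearMap K (fun _ : Fin n => Laurent K n) (Laurent K n) :=
  ((Matrix.detRowAlternating :
      (Fin n → Laurent K n) [⋀^Fin n]→ₗ[Laurent K n] Laurent K n).toMultilinearMap.restrictScalars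
      K).compLinearMap (fun _ => LinearMap.pi fun i => lpdL K n i)

theorem ljacF_apply (w : Fin n → Laurent K n) : ljacF K n w = ljac w := by
  rw [ljac, ← Matrix.det_transpose]
  rfl

theorem ljacF_lmon (α : Fin n → (Fin n → ℤ)) :
    ljacF K n (fun j => lmon (α j)) =
      AddMonoidAlgebra.single ((∑ j, α j) - fun _ => 1)
        (Matrix.det (Matrix.of fun k j => ((α j k : K)))) := by
  rw [ljacF_apply]
  unfold ljac
  rw [Matrix.det_apply, Matrix.det_apply]
  refine Eq.trans ?_ (amsingle_finset_sum _ _ _).symm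
  refine Finset.sum_congr rfl fun σ _ => ?_
  rw [← AddMonoidAlgebra.smul_single]
  congr 1
  simp only [Matrix.of_apply, lpd_lmon]
  rw [AddMonoidAlgebra.prod_single]
  congr 1
  rw [Finset.sum_sub_distrib]
  congr 1
  rw [Equiv.sum_comp σ (fun k => (Pi.single k 1 : Fin n → ℤ))]
  rw [Finset.univ_sum_single (fun _ => (1:ℤ))]

theorem key {m : ℕ} (u : Fin (m+1) → Laurent K (m+2)) (β : Fin (m+2) → ℤ) :
    (ljac (Fin.snoc u (lmon β)) : Laurent K (m+2)).coeff (β - fun _ => 1) = 0 := by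
  classical
  set w : Fin (m+2) → Laurent K (m+2) := Fin.snoc u (lmon β) with hw
  have hdecomp : ∀ j, w j = ∑ α ∈ (w j).coeff.support, ((w j).coeff α) • (lmon α : Laurent K (m+2)) := by
    intro j
    conv_lhs => rw [← AddMonoidAlgebra.sum_coeff_single (w j)]
    rw [Finsupp.sum]
    refine Finset.sum_congr rfl fun α _ => ?_
    rw [lmon, AddMonoidAlgebra.smul_single', mul_one]
  have hexp : ljac w = ∑ r ∈ Fintype.piFinset (fun j => (w j).coeff.support),
      (∏ j, (w j).coeff (r j)) • AddMonoidAlgebra.single ((∑ j, r j) - fun _ => 1)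
        (Matrix.det (Matrix.of fun k j => ((r j k : K)))) := by
    rw [← ljacF_apply]
    calc ljacF K (m+2) w
        = ljacF K (m+2) (fun j => ∑ α ∈ (w j).coeff.support, ((w j).coeff α) • lmon α) := by
          congr 1; funext j; exact hdecomp j
      _ = ∑ r ∈ Fintype.piFinset (fun j => (w j).coeff.support),
            ljacF K (m+2) (fun j => ((w j).coeff (r j)) • lmon (r j)) :=
          MultilinearMap.map_sum_finset _ _ _
      _ = _ := by
          refine Finset.sum_congr rfl fun r _ => ?_
          rw [MultilinearMap.map_smul_univ, ljacF_lmon]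
  rw [hexp, AddMonoidAlgebra.coeff_sum, Finsupp.finset_sum_apply]
  refine Finset.sum_eq_zero fun r hr => ?_
  rw [AddMonoidAlgebra.coeff_smul, Finsupp.smul_apply]
  by_cases hs : (∑ j, r j) = β
  · -- determinant vanishes
    have hlast : r (Fin.last (m+1)) = β := by
      have hmem := (Fintype.mem_piFinset.mp hr) (Fin.last (m+1))
      rw [hw] at hmem
      simp only [Fin.snoc_last] at hmem
      rw [lmon, AddMonoidAlgebra.coeff_single, Finsupp.support_single_ne_zero _ (one_ne_zero)] at hmem
      simpa using hmem
    have hsum0 : (∑ j : Fin (m+1), r j.castSucc) = 0 := by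
      have h2 := hs
      rw [Fin.sum_univ_castSucc, hlast] at h2
      have := add_right_cancel (b := β) (a := ∑ j : Fin (m+1), r j.castSucc) (c := 0)
      exact this (by rw [zero_add]; exact h2)
    have hdet : Matrix.det (Matrix.of fun k j => ((r j k : K))) = 0 := by
      rw [← Matrix.exists_mulVec_eq_zero_iff]
      refine ⟨Fin.snoc (fun _ => (1:K)) 0, ?_, ?_⟩
      · intro h0
        have h1 : (Fin.snoc (fun _ => (1:K)) 0 : Fin (m+2) → K) (Fin.castSucc 0) = 0 := by
          rw [h0]; rfl
        rw [Fin.snoc_castSucc] at h1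
        exact one_ne_zero h1
      · funext k
        simp only [Matrix.mulVec, dotProduct, Matrix.of_apply, Pi.zero_apply]
        rw [Fin.sum_univ_castSucc]
        simp only [Fin.snoc_castSucc, Fin.snoc_last, mul_zero, mul_one, add_zero]
        have hz : ((∑ j : Fin (m+1), r j.castSucc) k : ℤ) = 0 := by rw [hsum0]; rfl
        rw [Finset.sum_apply] at hz
        have : ((∑ j : Fin (m+1), r j.castSucc k : ℤ) : K) = 0 := by rw [hz]; exact Int.cast_zero
        rw [Int.cast_sum] at this
        exact this
    rw [hdet]
    simp
  · -- exponent mismatch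
    have hne : ((∑ j, r j) - fun _ => (1:ℤ)) ≠ β - fun _ => 1 := by
      intro hE
      exact hs (by funext k; have := congrFun hE k; simpa using this)
    rw [AddMonoidAlgebra.coeff_single, Finsupp.single_eq_of_ne' hne]
    simp

theorem lDelta_lmon (β : Fin n → ℤ) :
    lDelta (lmon β : Laurent K n) =
      AddMonoidAlgebra.single β ((∑ i, (β i : K)) + (n : K) / (1 - (n : K))) := by
  have h1 : ∀ i : Fin n, lmon (Pi.single i 1) * lpd i (lmon β : Laurent K n)
      = AddMonoidAlgebra.single β (β i : K) := by
    intro i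
    rw [lpd_lmon, lmon, AddMonoidAlgebra.single_mul_single, one_mul]
    congr 1
    funext k
    simp
  have h2 : ((n : K) / (1 - (n : K))) • (lmon β : Laurent K n)
      = AddMonoidAlgebra.single β ((n : K) / (1 - (n : K))) := by
    rw [lmon, AddMonoidAlgebra.smul_single', mul_one]
  have h3 : (∑ i : Fin n, lmon (Pi.single i 1) * lpd i (lmon β : Laurent K n))
      = AddMonoidAlgebra.single β (∑ i, (β i : K)) :=
    Eq.trans (Finset.sum_congr rfl fun i _ => h1 i) (amsingle_finset_sum _ _ _).symm
  unfold lDelta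
  rw [h3, h2]
  exact (AddMonoidAlgebra.single_add _ _ _).symm

theorem lDi_lmon (i : Fin n) (β : Fin n → ℤ) :
    lDi i (lmon β : Laurent K n) =
      AddMonoidAlgebra.single (β - fun _ => 1) (β i : K) := by
  unfold lDi
  rw [lpd_lmon, lmon, AddMonoidAlgebra.single_mul_single, one_mul]
  congr 1
  funext k
  simp [Pi.single_apply]
  ring

end aux

/-- (char `K = 0`, `n = m + 2 ≥ 2`.) If `λ_0·Δ(v) + Σ_i λ_i·D_i(v) = Jac_n^S(u_1,…,u_{n−1},v)`
for all `v`, then `λ_0 = λ_1 = … = λ_n = 0`; i.e. no nontrivial linear combination of the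
outer derivations `Δ, D_1,…,D_n` of `(K_n, Jac_n^S)` is interior. -/
theorem lDelta_lDi_not_interior {K : Type*} [Field K] [CharZero K] {m : ℕ}
    (lam0 : K) (lam : Fin (m + 2) → K) (u : Fin (m + 1) → Laurent K (m + 2))
    (h : ∀ v : Laurent K (m + 2),
      lam0 • lDelta v + ∑ i : Fin (m + 2), lam i • lDi i v = ljac (Fin.snoc u v)) :
    lam0 = 0 ∧ ∀ i : Fin (m + 2), lam i = 0 := by
  classical
  have hc : (((m+2 : ℕ) : K) / (1 - ((m+2 : ℕ) : K))) ≠ 0 := by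
    apply div_ne_zero
    · exact Nat.cast_ne_zero.mpr (by omega)
    · intro hz
      have h1 : (1 : K) = ((m+2 : ℕ) : K) := sub_eq_zero.mp hz
      have h2 : ((m+2 : ℕ) : K) = ((1 : ℕ) : K) := by rw [← h1]; simp
      have := Nat.cast_injective (R := K) h2
      omega
  -- Step 1 : lam0 = 0
  have hlam0 : lam0 = 0 := by
    have h0 := h (lmon 0)
    rw [lDelta_lmon] at h0
    have hDi : ∀ i : Fin (m+2), lDi i (lmon (0 : Fin (m+2) → ℤ) : Laurent K (m+2)) = 0 := by
      intro i
      rw [lDi_lmon]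
      simp
    have hjac : ljac (Fin.snoc u (lmon (0 : Fin (m+2) → ℤ)) : Fin (m+2) → Laurent K (m+2)) = 0 := by
      unfold ljac
      apply Matrix.det_eq_zero_of_column_eq_zero (Fin.last (m+1))
      intro i
      simp only [Matrix.of_apply, Fin.snoc_last, lpd_lmon]
      simp
    rw [hjac] at h0
    simp only [hDi, smul_zero, Finset.sum_const_zero, add_zero] at h0
    rw [AddMonoidAlgebra.smul_single'] at h0
    have := (AddMonoidAlgebra.single_eq_zero).mp h0
    simp only [Pi.zero_apply, Int.cast_zero, Finset.sum_const_zero, zero_add] at this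
    rcases mul_eq_zero.mp this with h' | h'
    · exact h'
    · exact absurd h' (by exact_mod_cast hc)
  -- Step 2 : each lam i = 0
  have hβ : ∀ β : Fin (m+2) → ℤ, (∑ i : Fin (m+2), lam i * (β i : K)) = 0 := by
    intro β
    have h0 := congrArg (fun f : Laurent K (m+2) => f.coeff (β - fun _ => 1)) (h (lmon β))
    rw [key u β] at h0
    rw [hlam0, zero_smul, zero_add] at h0
    rw [AddMonoidAlgebra.coeff_sum, Finsupp.finset_sum_apply] at h0
    refine Eq.trans ?_ h0
    refine Finset.sum_congr rfl fun i _ => ?_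
    rw [lDi_lmon, AddMonoidAlgebra.coeff_smul, Finsupp.smul_apply, AddMonoidAlgebra.coeff_single, Finsupp.single_eq_same, smul_eq_mul]
  constructor
  · exact hlam0
  · intro i
    have := hβ (Pi.single i 1)
    simpa [Pi.single_apply, apply_ite (fun z : ℤ => (z : K)), Finset.sum_ite_eq', mul_ite] using this
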